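/- For real p with 1 < p < n (n > 1 an integer): ν(p',n)·cos(π/n) + μ(p',n)·cos(π/p') = π_{p,n}/2, where p' = p/(p-1). -/

import Mathlib

open Real MeasureTheory Set

noncomputable def rB (u v : ℝ) : ℝ := ∫ s in Ioo (0:ℝ) 1, s ^ (u-1) * (1-s) ^ (v-1)

lemma rB_eq_Gamma {u v : ℝ} (hu : 0 < u) (hv : 0 < v) :
    rB u v = Gamma u * Gamma v / Gamma (u+v) := by
  have hcb : Complex.betaIntegral u v = ((rB u v : ℝ) : ℂ) := by
    rw [Complex.betaIntegral, rB, ← integral_Ioc_eq_integral_Ioo,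
      ← intervalIntegral.integral_of_le zero_le_one, ← intervalIntegral.integral_ofReal]
    apply intervalIntegral.integral_congr
    intro t ht
    rw [uIcc_of_le zero_le_one] at ht
    have ht0 : (0:ℝ) ≤ t := ht.1
    have ht1 : (0:ℝ) ≤ 1 - t := by linarith [ht.2]
    show (t:ℂ) ^ ((u:ℂ) - 1) * ((1:ℂ) - (t:ℂ)) ^ ((v:ℂ) - 1) = ((t ^ (u-1) * (1-t) ^ (v-1) : ℝ) : ℂ)
    rw [Complex.ofReal_mul, Complex.ofReal_cpow ht0, Complex.ofReal_cpow ht1]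
    push_cast
    ring_nf
  have h := Complex.Gamma_mul_Gamma_eq_betaIntegral
    (s := (u:ℂ)) (t := (v:ℂ)) (by simpa using hu) (by simpa using hv)
  rw [hcb] at h
  have h2 : ((Gamma u * Gamma v : ℝ) : ℂ) = ((Gamma (u+v) * rB u v : ℝ) : ℂ) := by
    rw [Complex.ofReal_mul, Complex.ofReal_mul, ← Complex.Gamma_ofReal u,
      ← Complex.Gamma_ofReal v, ← Complex.Gamma_ofReal (u+v), Complex.ofReal_add]
    exact h
  have h3 := Complex.ofReal_injective h2
  have hG : Gamma (u+v) ≠ 0 := (Gamma_pos_of_pos (by linarith)).ne'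
  field_simp
  linarith [h3]

lemma key_algebra {x a : ℝ} (hx0 : 0 < x) (hxa : x < a) (ha : a < 1) :
    rB x (a-x) * Real.cos (π*x) + rB (a-x) (1-a) * Real.cos (π*(1-a)) = rB x (1-a) := by
  have hax0 : 0 < a - x := by linarith
  have h1a : 0 < 1 - a := by linarith
  have h1x : 0 < 1 - x := by linarith
  have h1xa : 0 < 1 + x - a := by linarith
  have ha0 : 0 < a := by linarith
  have e1 : rB x (a-x) = Gamma x * Gamma (a-x) / Gamma a := by
    rw [rB_eq_Gamma hx0 hax0]; ring_nf
  have e2 : rB (a-x) (1-a) = Gamma (a-x) * Gamma (1-a) / Gamma (1-x) := by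
    rw [rB_eq_Gamma hax0 h1a]; ring_nf
  have e3 : rB x (1-a) = Gamma x * Gamma (1-a) / Gamma (1+x-a) := by
    rw [rB_eq_Gamma hx0 h1a]; ring_nf
  have r1 := Real.Gamma_mul_Gamma_one_sub x
  have r2 := Real.Gamma_mul_Gamma_one_sub a
  have r3 := Real.Gamma_mul_Gamma_one_sub (a - x)
  have h13 : 1 - (a - x) = 1 + x - a := by ring
  rw [h13] at r3
  have sx : 0 < Real.sin (π * x) := Real.sin_pos_of_pos_of_lt_pi (by positivity)
    (by nlinarith [Real.pi_pos])
  have sa : 0 < Real.sin (π * a) := Real.sin_pos_of_pos_of_lt_pi (by positivity)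
    (by nlinarith [Real.pi_pos])
  have sax : 0 < Real.sin (π * (a - x)) := Real.sin_pos_of_pos_of_lt_pi (by positivity)
    (by nlinarith [Real.pi_pos])
  have gx := Real.Gamma_pos_of_pos hx0
  have gax := Real.Gamma_pos_of_pos hax0
  have ga := Real.Gamma_pos_of_pos ha0
  have g1a := Real.Gamma_pos_of_pos h1a
  have g1x := Real.Gamma_pos_of_pos h1x
  have g1xa := Real.Gamma_pos_of_pos h1xa
  have hc : Real.cos (π*(1-a)) = - Real.cos (π*a) := by
    rw [show π*(1-a) = π - π*a by ring, Real.cos_pi_sub]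
  have hs : Real.sin (π*(a-x)) = Real.sin (π*a) * Real.cos (π*x)
      - Real.cos (π*a) * Real.sin (π*x) := by
    rw [show π*(a-x) = π*a - π*x by ring, Real.sin_sub]
  rw [eq_div_iff sx.ne'] at r1
  rw [eq_div_iff sa.ne'] at r2
  rw [eq_div_iff sax.ne'] at r3
  rw [e1, e2, e3, hc]
  -- express Gamma (1-x), Gamma (1+x-a), Gamma (1-a) from reflection
  have f1 : Gamma (1-x) = π / (Real.sin (π*x) * Gamma x) := by
    rw [eq_div_iff (mul_pos sx gx).ne']
    linear_combination r1
  have f3 : Gamma (1+x-a) = π / (Real.sin (π*(a-x)) * Gamma (a-x)) := by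
    field_simp
    linear_combination r3
  have f2 : Gamma (1-a) = π / (Real.sin (π*a) * Gamma a) := by
    rw [eq_div_iff (mul_pos sa ga).ne']
    linear_combination r2
  rw [f1, f2, f3]
  have hpi := Real.pi_pos
  field_simp
  have sa' : Real.sin (a*π) ≠ 0 := by rw [mul_comm]; exact sa.ne'
  rw [show (a - x) * π = a*π - x*π by ring, Real.sin_sub]
  field_simp
  ring

lemma rpow_pow_cancel {s : ℝ} (hs : 0 < s) {n : ℕ} (hn : 0 < n) :
    (s ^ ((n:ℝ)⁻¹)) ^ n = s := by
  rw [← Real.rpow_natCast (s ^ ((n:ℝ)⁻¹)) n, ← Real.rpow_mul hs.le,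
    inv_mul_cancel₀ (by exact_mod_cast hn.ne'), Real.rpow_one]

lemma image_rpow_Ioo {n : ℕ} (hn : 0 < n) :
    (fun s : ℝ => s ^ ((n:ℝ)⁻¹)) '' Ioo 0 1 = Ioo 0 1 := by
  have hninv : (0:ℝ) < (n:ℝ)⁻¹ := by positivity
  ext t
  constructor
  · rintro ⟨s, hs, rfl⟩
    exact ⟨Real.rpow_pos_of_pos hs.1 _, Real.rpow_lt_one hs.1.le hs.2 hninv⟩
  · rintro ht
    refine ⟨t ^ (n:ℝ), ⟨Real.rpow_pos_of_pos ht.1 _, Real.rpow_lt_one ht.1.le ht.2 (by positivity)⟩, ?_⟩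
    show (t ^ ((n:ℝ))) ^ ((n:ℝ)⁻¹) = t
    rw [← Real.rpow_mul ht.1.le, mul_inv_cancel₀ (by positivity : ((n:ℝ) ≠ 0))]
    exact Real.rpow_one t

lemma lemA {n : ℕ} (hn : 1 < n) {a : ℝ} :
    (∫ t in Ioo (0:ℝ) 1, (1 - t ^ n) ^ (-a)) = (1/(n:ℝ)) * rB (1/(n:ℝ)) (1-a) := by
  have hn0 : (0:ℝ) < (n:ℝ) := by exact_mod_cast Nat.lt_of_lt_of_le Nat.zero_lt_one hn.le
  have hderiv : ∀ s ∈ Ioo (0:ℝ) 1, HasDerivWithinAt (fun s : ℝ => s ^ ((n:ℝ)⁻¹))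
      ((n:ℝ)⁻¹ * s ^ ((n:ℝ)⁻¹ - 1)) (Ioo 0 1) s := fun s hs =>
    (Real.hasDerivAt_rpow_const (Or.inl hs.1.ne')).hasDerivWithinAt
  have hnpos : 0 < n := by omega
  have hinj : InjOn (fun s : ℝ => s ^ ((n:ℝ)⁻¹)) (Ioo 0 1) := by
    intro s1 h1 s2 h2 h
    have := congrArg (fun y : ℝ => y ^ n) h
    simpa [rpow_pow_cancel h1.1 hnpos, rpow_pow_cancel h2.1 hnpos] using this
  have := integral_image_eq_integral_abs_deriv_smul measurableSet_Ioo hderiv hinj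
    (fun t => (1 - t ^ n) ^ (-a))
  rw [image_rpow_Ioo hnpos] at this
  rw [this, rB, ← integral_const_mul]
  apply setIntegral_congr_fun measurableSet_Ioo
  intro s hs
  have hs0 := hs.1
  have hpow : (0:ℝ) < s ^ ((n:ℝ)⁻¹ - 1) := Real.rpow_pos_of_pos hs0 _
  simp only [smul_eq_mul]
  rw [rpow_pow_cancel hs0 hnpos, abs_of_pos (by positivity)]
  rw [show (1:ℝ)/(n:ℝ) - 1 = (n:ℝ)⁻¹ - 1 by ring, show (1:ℝ)-a-1 = -a by ring]
  ring

lemma lemB {n : ℕ} (hn : 1 < n) {a : ℝ} :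
    (∫ t in Ioi (1:ℝ), (t ^ n - 1) ^ (-a)) = (1/(n:ℝ)) * rB (a - 1/(n:ℝ)) (1-a) := by
  have hnpos : 0 < n := by omega
  have hn0 : (0:ℝ) < (n:ℝ) := by exact_mod_cast hnpos
  have hninv : (0:ℝ) < (n:ℝ)⁻¹ := by positivity
  set c : ℝ := -((n:ℝ)⁻¹) with hc
  have hcneg : c < 0 := by rw [hc]; linarith
  -- key simplification : for s ∈ (0,1), (s ^ c) ^ n = s⁻¹
  have hkey : ∀ s : ℝ, 0 < s → (s ^ c) ^ n = s⁻¹ := by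
    intro s hs
    rw [← Real.rpow_natCast (s ^ c) n, ← Real.rpow_mul hs.le, hc,
      show -(↑n)⁻¹ * (n:ℝ) = -1 by field_simp, Real.rpow_neg_one]
  have hderiv : ∀ s ∈ Ioo (0:ℝ) 1, HasDerivWithinAt (fun s : ℝ => s ^ c)
      (c * s ^ (c - 1)) (Ioo 0 1) s := fun s hs =>
    (Real.hasDerivAt_rpow_const (Or.inl hs.1.ne')).hasDerivWithinAt
  have hinj : InjOn (fun s : ℝ => s ^ c) (Ioo 0 1) := by
    intro s1 h1 s2 h2 h
    have := congrArg (fun y : ℝ => (y ^ n)⁻¹) h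
    simpa [hkey s1 h1.1, hkey s2 h2.1] using this
  have himg : (fun s : ℝ => s ^ c) '' Ioo 0 1 = Ioi 1 := by
    ext t
    constructor
    · rintro ⟨s, hs, rfl⟩
      exact mem_Ioi.mpr (Real.one_lt_rpow_iff_of_pos hs.1 |>.mpr (Or.inr ⟨hs.2, hcneg⟩))
    · rintro ht
      rw [mem_Ioi] at ht
      have ht0 : (0:ℝ) < t := by linarith
      refine ⟨t ^ (-(n:ℝ)), ⟨Real.rpow_pos_of_pos ht0 _,
        Real.rpow_lt_one_of_one_lt_of_neg ht (by linarith)⟩, ?_⟩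
      show (t ^ (-(n:ℝ))) ^ c = t
      rw [← Real.rpow_mul ht0.le, hc, show -(n:ℝ) * -(↑n)⁻¹ = 1 by field_simp, Real.rpow_one]
  have := integral_image_eq_integral_abs_deriv_smul measurableSet_Ioo hderiv hinj
    (fun t => (t ^ n - 1) ^ (-a))
  rw [himg] at this
  rw [this, rB, ← integral_const_mul]
  apply setIntegral_congr_fun measurableSet_Ioo
  intro s hs
  have hs0 := hs.1
  have h1s : (0:ℝ) < 1 - s := by linarith [hs.2]
  simp only [smul_eq_mul]
  rw [hkey s hs0]
  have habs : |c * s ^ (c-1)| = (n:ℝ)⁻¹ * s ^ (c-1) := by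
    rw [abs_mul, abs_of_neg hcneg, abs_of_pos (Real.rpow_pos_of_pos hs0 _), hc, neg_neg]
  rw [habs]
  have hfrac : s⁻¹ - 1 = (1-s)/s := by field_simp
  rw [hfrac, Real.div_rpow h1s.le hs0.le, Real.rpow_neg hs0.le a]
  rw [show a - 1/(n:ℝ) - 1 = a + (c - 1) by rw [hc]; ring, Real.rpow_add hs0,
    show (1:ℝ)-a-1 = -a by ring]
  field_simp

lemma lemC {n : ℕ} (hn : 1 < n) {a : ℝ} :
    (∫ t in Ioi (0:ℝ), (1 + t ^ n) ^ (-a)) = (1/(n:ℝ)) * rB (1/(n:ℝ)) (a - 1/(n:ℝ)) := by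
  have hnpos : 0 < n := by omega
  have hn0 : (0:ℝ) < (n:ℝ) := by exact_mod_cast hnpos
  have hninv : (0:ℝ) < (n:ℝ)⁻¹ := by positivity
  -- Step 1 : substitute t = x^(1/n)
  have step1 : (∫ t in Ioi (0:ℝ), (1 + t ^ n) ^ (-a))
      = ∫ x in Ioi (0:ℝ), (n:ℝ)⁻¹ * (x ^ ((n:ℝ)⁻¹ - 1) * (1 + x) ^ (-a)) := by
    rw [← integral_comp_rpow_Ioi (fun t => (1 + t ^ n) ^ (-a))
      (p := (n:ℝ)⁻¹) (ne_of_gt hninv)]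
    apply setIntegral_congr_fun measurableSet_Ioi
    intro x hx
    rw [mem_Ioi] at hx
    have hxn : (x ^ ((n:ℝ)⁻¹)) ^ n = x := by
      rw [← Real.rpow_natCast (x ^ ((n:ℝ)⁻¹)) n, ← Real.rpow_mul hx.le,
        inv_mul_cancel₀ hn0.ne', Real.rpow_one]
    simp only [smul_eq_mul]
    rw [hxn, abs_of_pos hninv]
    ring
  -- Step 2 : substitute x = s/(1-s)
  have hderiv : ∀ s ∈ Ioo (0:ℝ) 1, HasDerivWithinAt (fun s : ℝ => s / (1 - s))
      (((1-s)^2)⁻¹) (Ioo 0 1) s := by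
    intro s hs
    have h1s : 1 - s ≠ 0 := by
      have := hs.2; intro h; linarith
    have h := (hasDerivAt_id s).div ((hasDerivAt_const s (1:ℝ)).sub (hasDerivAt_id s)) h1s
    have h2 : (1 * (1 - s) - s * (0 - 1)) / (1 - s) ^ 2 = ((1-s)^2)⁻¹ := by
      field_simp
      ring
    simp only [id_eq, Pi.sub_apply] at h
    rw [h2] at h
    exact h.hasDerivWithinAt
  have hinj : InjOn (fun s : ℝ => s / (1 - s)) (Ioo 0 1) := by
    intro s1 h1 s2 h2 h
    have e1 : 1 - s1 ≠ 0 := by have := h1.2; intro hh; linarith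
    have e2 : 1 - s2 ≠ 0 := by have := h2.2; intro hh; linarith
    field_simp at h
    linarith
  have himg : (fun s : ℝ => s / (1 - s)) '' Ioo 0 1 = Ioi 0 := by
    ext t
    constructor
    · rintro ⟨s, hs, rfl⟩
      have : 0 < 1 - s := by linarith [hs.2]
      exact mem_Ioi.mpr (div_pos hs.1 this)
    · rintro ht
      rw [mem_Ioi] at ht
      refine ⟨t / (1 + t), ⟨div_pos ht (by linarith), by rw [div_lt_one (by linarith)]; linarith⟩, ?_⟩
      show t / (1 + t) / (1 - t / (1 + t)) = t
      have h1t : 1 + t ≠ 0 := by linarith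
      field_simp
      ring
  have step2 := integral_image_eq_integral_abs_deriv_smul measurableSet_Ioo hderiv hinj
    (fun x => x ^ ((n:ℝ)⁻¹ - 1) * (1 + x) ^ (-a))
  rw [himg] at step2
  rw [step1, integral_const_mul, step2, rB, one_div, ← integral_const_mul, ← integral_const_mul]
  apply setIntegral_congr_fun measurableSet_Ioo
  intro s hs
  have hs0 := hs.1
  have h1s : (0:ℝ) < 1 - s := by linarith [hs.2]
  simp only [smul_eq_mul]
  have e1 : 1 + s / (1 - s) = (1 - s)⁻¹ := by field_simp; ring
  rw [e1, abs_of_pos (by positivity), Real.div_rpow hs0.le h1s.le,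
    Real.inv_rpow h1s.le, Real.rpow_neg h1s.le a, inv_inv, div_eq_mul_inv,
    ← Real.rpow_neg h1s.le, ← Real.rpow_natCast (1-s) 2, ← Real.rpow_neg h1s.le,
    ]
  rw [show ((1-s) ^ (-((2:ℕ):ℝ)) * (s ^ ((n:ℝ)⁻¹ - 1) * (1-s) ^ (-((n:ℝ)⁻¹ - 1)) * (1-s) ^ a))
      = s ^ ((n:ℝ)⁻¹ - 1) * ((1-s) ^ (-((2:ℕ):ℝ)) * (1-s) ^ (-((n:ℝ)⁻¹ - 1)) * (1-s) ^ a) by ring,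
    ← Real.rpow_add h1s, ← Real.rpow_add h1s,
    show -((2:ℕ):ℝ) + -((n:ℝ)⁻¹ - 1) + a = a - (n:ℝ)⁻¹ - 1 by push_cast; ring]

theorem stmt_7 (p : ℝ) (n : ℕ) (hp : 1 < p) (hn : 1 < n) (hpn : p < n) :
    (∫ t in Ioi (0:ℝ), (1 + t ^ n) ^ (-(1/p))) * Real.cos (π / n)
      + (∫ t in Ioi (1:ℝ), (t ^ n - 1) ^ (-(1/p))) * Real.cos (π / (p / (p - 1)))
      = ∫ t in (0:ℝ)..1, (1 - t ^ n) ^ (-(1/p)) := by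
  have hp0 : (0:ℝ) < p := lt_trans one_pos hp
  have hn0 : (0:ℝ) < (n:ℝ) := by exact_mod_cast Nat.lt_of_lt_of_le Nat.zero_lt_one hn.le
  set a : ℝ := 1/p with ha_def
  set x : ℝ := 1/(n:ℝ) with hx_def
  have hx0 : 0 < x := by positivity
  have hxa : x < a := by
    apply one_div_lt_one_div_of_lt hp0 hpn
  have ha1 : a < 1 := by
    rw [ha_def, div_lt_one hp0]; exact hp
  have hcos1 : π / (n:ℝ) = π * x := by rw [hx_def]; ring
  have hcos2 : π / (p / (p - 1)) = π * (1 - a) := by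
    rw [ha_def]
    field_simp
  rw [hcos1, hcos2, lemB hn, lemC hn]
  rw [intervalIntegral.integral_of_le zero_le_one, integral_Ioc_eq_integral_Ioo, lemA hn]
  have := key_algebra hx0 hxa ha1
  rw [← hx_def] at *
  nlinarith [this]
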